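/- arXiv:0812.2473 — 2 statements merged into one kernel-verified Lean document; each statement's English description precedes it below -/
import Mathlib

section
/- Broken lines compute last passage percolation: let S be a rectangular domain and ξ : S → [0,∞) a birth field. Then the last passage percolation value equals the total weight of the broken lines crossing S associated to the flow field with zero boundary conditions and births ξ: G_S(ξ) = H_S(ξ). -/
/-! Common definitions for the broken line process on the even sublattice
`Z̃² = {(t,x) ∈ ℤ² : t + x even}`. A point is a pair `(t, x)`. -/

/-- A point `(t, x)` of `ℤ²`. -/
abbrev BLPt := ℤ × ℤ

/-- An edge between diagonal nearest neighbors, encoded by its endpoint of smaller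
`x`-coordinate together with a direction: `(y, true)` is the edge from `y = (t,x)` to
`(t+1, x+1)`, and `(y, false)` is the edge from `y` to `(t−1, x+1)`. -/
abbrev BLEdge := BLPt × Bool

namespace BL

/-- The endpoint of an edge with smaller `x`-coordinate. -/
def fstPt (e : BLEdge) : BLPt := e.1

/-- The endpoint of an edge with larger `x`-coordinate. -/
def sndPt (e : BLEdge) : BLPt := (e.1.1 + (if e.2 then 1 else -1), e.1.2 + 1)

/-- The edge `e_y^NE` from `y = (t,x)` to `(t+1, x+1)`. -/
def eNE (y : BLPt) : BLEdge := (y, true)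

/-- The edge `e_y^NW` from `y = (t,x)` to `(t−1, x+1)`. -/
def eNW (y : BLPt) : BLEdge := (y, false)

/-- The edge `e_y^SE` from `y = (t,x)` to `(t+1, x−1)`. -/
def eSE (y : BLPt) : BLEdge := ((y.1 + 1, y.2 - 1), false)

/-- The edge `e_y^SW` from `y = (t,x)` to `(t−1, x−1)`. -/
def eSW (y : BLPt) : BLEdge := ((y.1 - 1, y.2 - 1), true)

/-- A rectangular domain: a nonempty set of the form
`{(t,x) ∈ Z̃² : a ≤ x + t ≤ b, c ≤ x − t ≤ d}`. -/
def IsRectDomain (S : Set BLPt) : Prop :=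
  S.Nonempty ∧ ∃ a b c d : ℤ,
    S = {y | (y.1 + y.2) % 2 = 0 ∧
      a ≤ y.2 + y.1 ∧ y.2 + y.1 ≤ b ∧ c ≤ y.2 - y.1 ∧ y.2 - y.1 ≤ d}

/-- `S̄`: the union of `S` with all points at Euclidean distance `√2` from a point
of `S` (i.e. diagonal nearest neighbors of points of `S`). -/
def bar (S : Set BLPt) : Set BLPt :=
  S ∪ {y | ∃ y' ∈ S, (y.1 - y'.1) ^ 2 = 1 ∧ (y.2 - y'.2) ^ 2 = 1}

/-- `∂S̄ = S̄ \ S`. -/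
def bdry (S : Set BLPt) : Set BLPt := bar S \ S

/-- `ℰ(S̄)`: the edges with at least one endpoint in `S`. -/
def edgeSet (S : Set BLPt) : Set BLEdge := {e | fstPt e ∈ S ∨ sndPt e ∈ S}

/-- A flow field on `ℰ(S̄)`: nonnegative on `ℰ(S̄)` and conservative at every `y ∈ S`:
`η(e_y^SW) + η(e_y^SE) = η(e_y^NW) + η(e_y^NE)`. -/
def IsFlowField (S : Set BLPt) (η : BLEdge → ℝ) : Prop :=
  (∀ e ∈ edgeSet S, 0 ≤ η e) ∧
  ∀ y ∈ S, η (eSW y) + η (eSE y) = η (eNW y) + η (eNE y)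

/-- A broken trace `(y₀, e₁, y₁, …, e_n, y_n)`, `n ≥ 1`, encoded by its list of points:
all points lie in `Z̃²`, and consecutive points satisfy `x_{i} = x_{i−1} + 1`,
`t_i = t_{i−1} ± 1` (the edges are then determined). -/
def IsBrokenTrace (l : List BLPt) : Prop :=
  2 ≤ l.length ∧ (∀ y ∈ l, (y.1 + y.2) % 2 = 0) ∧
  ∀ i : ℕ, ∀ h : i + 1 < l.length,
    (l[i + 1]'h).2 = (l[i]'(Nat.lt_of_succ_lt h)).2 + 1 ∧
    ((l[i + 1]'h).1 = (l[i]'(Nat.lt_of_succ_lt h)).1 + 1 ∨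
      (l[i + 1]'h).1 = (l[i]'(Nat.lt_of_succ_lt h)).1 - 1)

/-- The list of edges `e₁, …, e_n` of a broken trace. -/
def traceEdges (l : List BLPt) : List BLEdge :=
  List.zipWith (fun y y' => ((y, y'.1 == y.1 + 1) : BLEdge)) l l.tail

/-- `ℓ ⊆ S̄`: a broken trace all of whose edges lie in `ℰ(S̄)`. -/
def InBar (S : Set BLPt) (l : List BLPt) : Prop :=
  IsBrokenTrace l ∧ ∀ e ∈ traceEdges l, e ∈ edgeSet S

/-- `ℓ` crosses `S`: `ℓ ⊆ S̄` and its two extremal points lie in `∂S̄`.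
`C(S)` is the set of broken traces crossing `S`. -/
def Crosses (S : Set BLPt) (l : List BLPt) : Prop :=
  InBar S l ∧ (∃ y ∈ bdry S, l.head? = some y) ∧ (∃ y ∈ bdry S, l.getLast? = some y)

/-- `ℓ ⪰ ℓ'` (`ℓ` is to the right of `ℓ'`): `t(x) ≥ t'(x)` for every
`x ∈ D(ℓ) ∩ D(ℓ')`, and `t(x) ≥ t'(x')` for some `x ∈ D(ℓ)`, `x' ∈ D(ℓ')`. -/
def RightOf (l l' : List BLPt) : Prop :=
  (∀ y ∈ l, ∀ y' ∈ l', y.2 = y'.2 → y'.1 ≤ y.1) ∧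
  ∃ y ∈ l, ∃ y' ∈ l', y'.1 ≤ y.1

/-- The birth `ξ_y = min(η(e_y^NE), η(e_y^SE))` of a flow field at `y`. -/
noncomputable def xi (η : BLEdge → ℝ) (y : BLPt) : ℝ := min (η (eNE y)) (η (eSE y))

/-- Association of atoms `(e₁,p₁) ∼ (e₂,p₂)` at a vertex `y ∈ S` (Cases 1–4). -/
def Assoc (S : Set BLPt) (η : BLEdge → ℝ) (e₁ : BLEdge) (p₁ : ℝ) (e₂ : BLEdge) (p₂ : ℝ) :
    Prop :=
  ∃ y ∈ S,
    (e₁ = eSW y ∧ e₂ = eNW y ∧ 0 < p₁ ∧ p₁ ≤ min (η e₁) (η e₂) ∧ p₂ = p₁) ∨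
    (e₁ = eSE y ∧ e₂ = eNW y ∧ η (eSW y) < p₂ ∧ p₂ ≤ η e₂ ∧ p₁ = p₂ - η (eSW y)) ∨
    (e₁ = eSW y ∧ e₂ = eNE y ∧ η (eNW y) < p₁ ∧ p₁ ≤ η e₁ ∧ p₂ = p₁ - η (eNW y)) ∨
    (e₁ = eSE y ∧ e₂ = eNE y ∧ η e₁ - xi η y < p₁ ∧ p₁ ≤ η e₁ ∧
      η e₂ - xi η y < p₂ ∧ p₂ ≤ η e₂ ∧ η e₁ - p₁ = η e₂ - p₂)

/-- A chain of associated atoms along a list of edges: `ps i` is an atom of the `i`-th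
edge and consecutive atoms are associated. -/
def IsChain (S : Set BLPt) (η : BLEdge → ℝ) (es : List BLEdge) (ps : ℕ → ℝ) : Prop :=
  (∀ i : ℕ, ∀ h : i < es.length, 0 < ps i ∧ ps i ≤ η (es[i]'h)) ∧
  ∀ i : ℕ, ∀ h : i + 1 < es.length,
    Assoc S η (es[i]'(Nat.lt_of_succ_lt h)) (ps i) (es[i + 1]'h) (ps (i + 1))

/-- The set of atoms of the `i`-th edge of `ℓ` that participate in some chain of
associated atoms along `ℓ`. -/
def chainPosSet (S : Set BLPt) (η : BLEdge → ℝ) (l : List BLPt) (i : ℕ) : Set ℝ :=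
  {p | ∃ ps : ℕ → ℝ, IsChain S η (traceEdges l) ps ∧ ps i = p}

/-- The weight `w_η(ℓ)` of a broken trace: the common length of the maximal intervals
of atoms participating in chains along `ℓ` (and `0` if there is no such chain). -/
noncomputable def weight (S : Set BLPt) (η : BLEdge → ℝ) (l : List BLPt) : ℝ := by
  classical
  exact if (chainPosSet S η l 0).Nonempty then
      sSup (chainPosSet S η l 0) - sInf (chainPosSet S η l 0)
    else 0

end BL

namespace BL

/-- An edge of `ℰ(S̄)` joining `y ∈ S` to `y' ∈ ∂S̄` with `t_{y'} = t_y − 1`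
(a left-boundary edge, carrying the incoming boundary data `ζ°`). -/
def IsLeftBdryEdge (S : Set BLPt) (e : BLEdge) : Prop :=
  (fstPt e ∈ S ∧ sndPt e ∉ S ∧ (sndPt e).1 < (fstPt e).1) ∨
  (sndPt e ∈ S ∧ fstPt e ∉ S ∧ (fstPt e).1 < (sndPt e).1)

/-- Zero boundary conditions: `η` vanishes on all left-boundary edges. -/
def ZeroLeftBoundary (S : Set BLPt) (η : BLEdge → ℝ) : Prop :=
  ∀ e : BLEdge, IsLeftBdryEdge S e → η e = 0

/-- The recursion defining the flow field `η(ζ°, ξ)` from the birth field `ξ`: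
at every `y ∈ S`, `η(e_y^NE) = ξ_y + (η(e_y^SW) − η(e_y^NW))⁺` and
`η(e_y^SE) = ξ_y + (η(e_y^NW) − η(e_y^SW))⁺`. -/
def BirthRecursion (S : Set BLPt) (η : BLEdge → ℝ) (ξ : BLPt → ℝ) : Prop :=
  ∀ y ∈ S, η (eNE y) = ξ y + max (η (eSW y) - η (eNW y)) 0 ∧
    η (eSE y) = ξ y + max (η (eNW y) - η (eSW y)) 0

/-- A directed path `π ∈ Π_S`: it stays in `S`, starts at the unique leftmost point
`∂₀S` (minimal `t`), ends at the unique rightmost point `∂₁S` (maximal `t`), and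
satisfies `t_{i+1} = t_i + 1`, `x_{i+1} = x_i ± 1`. -/
def IsLppPath (S : Set BLPt) (p : List BLPt) : Prop :=
  p ≠ [] ∧ (∀ y ∈ p, y ∈ S) ∧
  (∀ y, p.head? = some y → ∀ y' ∈ S, y.1 ≤ y'.1) ∧
  (∀ y, p.getLast? = some y → ∀ y' ∈ S, y'.1 ≤ y.1) ∧
  ∀ i : ℕ, ∀ h : i + 1 < p.length,
    (p[i + 1]'h).1 = (p[i]'(Nat.lt_of_succ_lt h)).1 + 1 ∧
    ((p[i + 1]'h).2 = (p[i]'(Nat.lt_of_succ_lt h)).2 + 1 ∨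
      (p[i + 1]'h).2 = (p[i]'(Nat.lt_of_succ_lt h)).2 - 1)

/-- The last passage percolation value `G_S(ξ) = max_{π ∈ Π_S} Σ_{y ∈ π} ξ_y`. -/
noncomputable def lppValue (S : Set BLPt) (ξ : BLPt → ℝ) : ℝ :=
  sSup {v : ℝ | ∃ p : List BLPt, IsLppPath S p ∧ (p.map ξ).sum = v}

end BL

namespace BLAux
open BL

def pt (I₀ J₁ : ℤ) (m n : ℕ) : BLPt := (I₀ + m - J₁ + n, I₀ + m + J₁ - n)

noncomputable def g (ξ : ℕ → ℕ → ℝ) : ℕ → ℕ → ℝ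
  | 0, 0 => ξ 0 0
  | m+1, 0 => ξ (m+1) 0 + g ξ m 0
  | 0, n+1 => ξ 0 (n+1) + g ξ 0 n
  | m+1, n+1 => ξ (m+1) (n+1) + max (g ξ m (n+1)) (g ξ (m+1) n)
termination_by m n => (m, n)

lemma g_nonneg (ξ : ℕ → ℕ → ℝ) (hξ : ∀ m n, 0 ≤ ξ m n) : ∀ m n, 0 ≤ g ξ m n := by
  intro m n
  induction m, n using g.induct with
  | case1 => simpa [g] using hξ 0 0
  | case2 m ih => simp only [g]; linarith [hξ (m+1) 0]
  | case3 n ih => simp only [g]; linarith [hξ 0 (n+1)]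
  | case4 m n ih1 ih2 =>
      simp only [g]
      have := le_max_left (g ξ m (n+1)) (g ξ (m+1) n)
      linarith [hξ (m+1) (n+1)]

lemma g_eq (ξ : ℕ → ℕ → ℝ) (hξ : ∀ m n, 0 ≤ ξ m n) (m n : ℕ) :
    g ξ m n = ξ m n +
      max (if m = 0 then 0 else g ξ (m-1) n) (if n = 0 then 0 else g ξ m (n-1)) := by
  match m, n with
  | 0, 0 => simp [g]
  | m+1, 0 => simp [g, max_eq_left (g_nonneg ξ hξ m 0)]
  | 0, n+1 => simp [g, max_eq_right (g_nonneg ξ hξ 0 n)]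
  | m+1, n+1 => simp [g]

lemma exists_coords (S : Set BLPt) (hS : IsRectDomain S) :
    ∃ (I₀ J₁ : ℤ) (M N : ℕ), ∀ y, y ∈ S ↔ ∃ m n : ℕ, m ≤ M ∧ n ≤ N ∧ y = pt I₀ J₁ m n := by
  obtain ⟨⟨y₀, hy₀⟩, a, b, c, d, hSeq⟩ := hS
  subst hSeq
  simp only [Set.mem_setOf_eq] at hy₀
  refine ⟨(a + a % 2) / 2, (d - d % 2) / 2,
    ((b - b % 2) / 2 - (a + a % 2) / 2).toNat, ((d - d % 2) / 2 - (c + c % 2) / 2).toNat, ?_⟩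
  intro y
  simp only [Set.mem_setOf_eq]
  constructor
  · rintro ⟨hp, h1, h2, h3, h4⟩
    refine ⟨((y.1 + y.2) / 2 - (a + a % 2) / 2).toNat,
      ((d - d % 2) / 2 - (y.2 - y.1) / 2).toNat, ?_, ?_, ?_⟩
    · omega
    · omega
    · have : y = (y.1, y.2) := rfl
      rw [this, pt, Prod.mk.injEq]
      constructor <;> omega
  · rintro ⟨m, n, hm, hn, rfl⟩
    simp only [pt]
    refine ⟨by omega, by omega, by omega, by omega, by omega⟩

/-- clamped birth field in rectangle coordinates -/
noncomputable def xiN (ξ : BLPt → ℝ) (I₀ J₁ : ℤ) (M N : ℕ) : ℕ → ℕ → ℝ :=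
  fun m n => if m ≤ M ∧ n ≤ N then ξ (pt I₀ J₁ m n) else 0

section Flow
variable (S : Set BLPt) (ξ : BLPt → ℝ) (η : BLEdge → ℝ) (I₀ J₁ : ℤ) (M N : ℕ)

lemma xiN_nonneg (hξ : ∀ y ∈ S, 0 ≤ ξ y)
    (hmem : ∀ y, y ∈ S ↔ ∃ m n : ℕ, m ≤ M ∧ n ≤ N ∧ y = pt I₀ J₁ m n) :
    ∀ m n, 0 ≤ xiN ξ I₀ J₁ M N m n := by
  intro m n
  unfold xiN
  split
  · exact hξ _ ((hmem _).2 ⟨m, n, by tauto⟩)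
  · exact le_refl 0

lemma not_mem_left (hmem : ∀ y, y ∈ S ↔ ∃ m n : ℕ, m ≤ M ∧ n ≤ N ∧ y = pt I₀ J₁ m n)
    (n : ℕ) : ((pt I₀ J₁ 0 n).1 - 1, (pt I₀ J₁ 0 n).2 - 1) ∉ S := by
  intro h
  obtain ⟨m', n', _, _, he⟩ := (hmem _).1 h
  rw [pt, pt, Prod.mk.injEq] at he
  simp only at he
  omega

lemma not_mem_top (hmem : ∀ y, y ∈ S ↔ ∃ m n : ℕ, m ≤ M ∧ n ≤ N ∧ y = pt I₀ J₁ m n)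
    (m : ℕ) : ((pt I₀ J₁ m 0).1 - 1, (pt I₀ J₁ m 0).2 + 1) ∉ S := by
  intro h
  obtain ⟨m', n', _, _, he⟩ := (hmem _).1 h
  rw [pt, pt, Prod.mk.injEq] at he
  simp only at he
  omega

lemma eSW_eq (m n : ℕ) : eSW (pt I₀ J₁ (m+1) n) = eNE (pt I₀ J₁ m n) := by
  simp only [eSW, eNE, pt]
  rw [Prod.mk.injEq, Prod.mk.injEq]
  push_cast
  refine ⟨⟨by ring, by ring⟩, rfl⟩

lemma eNW_eq (m n : ℕ) : eNW (pt I₀ J₁ m (n+1)) = eSE (pt I₀ J₁ m n) := by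
  simp only [eNW, eSE, pt]
  rw [Prod.mk.injEq, Prod.mk.injEq]
  push_cast
  refine ⟨⟨by ring, by ring⟩, rfl⟩

lemma flow_formula
    (hmem : ∀ y, y ∈ S ↔ ∃ m n : ℕ, m ≤ M ∧ n ≤ N ∧ y = pt I₀ J₁ m n)
    (hzb : ZeroLeftBoundary S η) (hrec : BirthRecursion S η ξ)
    (hξ0 : ∀ m n, 0 ≤ xiN ξ I₀ J₁ M N m n) :
    ∀ k m n, m + n ≤ k → m ≤ M → n ≤ N →
      η (eNE (pt I₀ J₁ m n)) = g (xiN ξ I₀ J₁ M N) m n -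
        (if n = 0 then 0 else g (xiN ξ I₀ J₁ M N) m (n-1)) ∧
      η (eSE (pt I₀ J₁ m n)) = g (xiN ξ I₀ J₁ M N) m n -
        (if m = 0 then 0 else g (xiN ξ I₀ J₁ M N) (m-1) n) := by
  set GX := xiN ξ I₀ J₁ M N with hGX
  intro k
  induction k using Nat.strong_induction_on with
  | _ k ih =>
  intro m n hk hm hn
  have hyS : pt I₀ J₁ m n ∈ S := (hmem _).2 ⟨m, n, hm, hn, rfl⟩
  obtain ⟨hNE, hSE⟩ := hrec (pt I₀ J₁ m n) hyS
  -- value of the SW input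
  have hSW : η (eSW (pt I₀ J₁ m n)) =
      (if m = 0 then 0 else
        g GX (m-1) n - (if n = 0 then 0 else g GX (m-1) (n-1))) := by
    match m, hm, hk with
    | 0, hm, hk =>
      simp only [if_pos rfl]
      apply hzb
      right
      have h1 : sndPt (eSW (pt I₀ J₁ 0 n)) = pt I₀ J₁ 0 n := by
        simp only [sndPt, eSW, if_pos, pt]
        rw [Prod.mk.injEq]
        constructor <;> ring
      refine ⟨?_, ?_, ?_⟩
      · rw [h1]; exact (hmem _).2 ⟨0, n, by omega, hn, rfl⟩
      · exact not_mem_left S I₀ J₁ M N hmem n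
      · rw [h1]; show (pt I₀ J₁ 0 n).1 - 1 < (pt I₀ J₁ 0 n).1; omega
    | m+1, hm, hk =>
      rw [eSW_eq]
      have := (ih (m + n) (by omega) m n (by omega) (by omega) hn).1
      simpa using this
  -- value of the NW input
  have hNW : η (eNW (pt I₀ J₁ m n)) =
      (if n = 0 then 0 else
        g GX m (n-1) - (if m = 0 then 0 else g GX (m-1) (n-1))) := by
    match n, hn, hk with
    | 0, hn, hk =>
      simp only [if_pos rfl]
      apply hzb
      left
      have h1 : sndPt (eNW (pt I₀ J₁ m 0)) = ((pt I₀ J₁ m 0).1 - 1, (pt I₀ J₁ m 0).2 + 1) := by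
        simp [sndPt, eNW]
        omega
      refine ⟨hyS, ?_, ?_⟩
      · rw [h1]; exact not_mem_top S I₀ J₁ M N hmem m
      · rw [h1]
        show (pt I₀ J₁ m 0).1 - 1 < (fstPt (eNW (pt I₀ J₁ m 0))).1
        simp only [fstPt, eNW]
        omega
    | n+1, hn, hk =>
      rw [eNW_eq]
      have := (ih (m + n) (by omega) m n (le_refl _) hm (by omega)).2
      simpa using this
  have hxy : ξ (pt I₀ J₁ m n) = GX m n := by rw [hGX]; simp [xiN, hm, hn]
  have hgnn := g_nonneg GX hξ0
  rw [hSW, hNW, hxy] at hNE hSE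
  constructor
  · rw [hNE]
    match m, n with
    | 0, 0 => simp [g]
    | 0, n+1 =>
      simp only [Nat.succ_ne_zero, if_false, if_true, reduceIte, Nat.add_sub_cancel, g]
      rw [sub_zero, zero_sub, max_eq_right (by linarith [hgnn 0 n] : -g GX 0 n ≤ (0:ℝ))]
      ring
    | m+1, 0 =>
      simp only [Nat.succ_ne_zero, if_false, if_true, reduceIte, Nat.add_sub_cancel, g]
      rw [sub_zero, sub_zero, max_eq_left (hgnn m 0)]
      ring
    | m+1, n+1 =>
      simp only [Nat.succ_ne_zero, if_false, reduceIte, Nat.add_sub_cancel, g]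
      rcases le_total (g GX m (n+1)) (g GX (m+1) n) with h | h
      · rw [max_eq_right h, max_eq_right (by linarith :
          g GX m (n+1) - g GX m n - (g GX (m+1) n - g GX m n) ≤ (0:ℝ))]
        ring
      · rw [max_eq_left h, max_eq_left (by linarith :
          (0:ℝ) ≤ g GX m (n+1) - g GX m n - (g GX (m+1) n - g GX m n))]
        ring
  · rw [hSE]
    match m, n with
    | 0, 0 => simp [g]
    | 0, n+1 =>
      simp only [Nat.succ_ne_zero, if_false, if_true, reduceIte, Nat.add_sub_cancel, g]
      rw [sub_zero, sub_zero, max_eq_left (hgnn 0 n)]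
      ring
    | m+1, 0 =>
      simp only [Nat.succ_ne_zero, if_false, if_true, reduceIte, Nat.add_sub_cancel, g]
      rw [sub_zero, zero_sub, max_eq_right (by linarith [hgnn m 0] : -g GX m 0 ≤ (0:ℝ))]
      ring
    | m+1, n+1 =>
      simp only [Nat.succ_ne_zero, if_false, reduceIte, Nat.add_sub_cancel, g]
      rcases le_total (g GX m (n+1)) (g GX (m+1) n) with h | h
      · rw [max_eq_right h, max_eq_left (by linarith :
          (0:ℝ) ≤ g GX (m+1) n - g GX m n - (g GX m (n+1) - g GX m n))]
        ring
      · rw [max_eq_left h, max_eq_right (by linarith :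
          g GX (m+1) n - g GX m n - (g GX m (n+1) - g GX m n) ≤ (0:ℝ))]
        ring


lemma pt_inj {m n m' n' : ℕ} (h : pt I₀ J₁ m n = pt I₀ J₁ m' n') : m = m' ∧ n = n' := by
  rw [pt, pt, Prod.mk.injEq] at h
  omega

lemma sndPt_eSW (y : BLPt) : sndPt (eSW y) = y := by
  simp [sndPt, eSW]

lemma sndPt_eSE (y : BLPt) : sndPt (eSE y) = y := by
  simp [sndPt, eSE]

lemma not_mem_bottom (hmem : ∀ y, y ∈ S ↔ ∃ m n : ℕ, m ≤ M ∧ n ≤ N ∧ y = pt I₀ J₁ m n)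
    (m : ℕ) : ((pt I₀ J₁ m N).1 + 1, (pt I₀ J₁ m N).2 - 1) ∉ S := by
  intro h
  obtain ⟨m', n', _, _, he⟩ := (hmem _).1 h
  rw [pt, pt, Prod.mk.injEq] at he
  simp only at he
  omega

lemma telescope (h : ℕ → ℝ) :
    ∀ K, ∑ m ∈ Finset.range (K+1), (h m - if m = 0 then 0 else h (m-1)) = h K := by
  intro K
  induction K with
  | zero => simp
  | succ K ih =>
    rw [Finset.sum_range_succ, ih]
    simp only [Nat.succ_ne_zero, if_false, Nat.add_sub_cancel]
    ring

lemma H_eq (hmem : ∀ y, y ∈ S ↔ ∃ m n : ℕ, m ≤ M ∧ n ≤ N ∧ y = pt I₀ J₁ m n)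
    (hzb : ZeroLeftBoundary S η) (hrec : BirthRecursion S η ξ)
    (hξ0 : ∀ m n, 0 ≤ xiN ξ I₀ J₁ M N m n) :
    ∑ᶠ e ∈ {e : BLEdge | sndPt e ∈ S ∧ fstPt e ∈ bdry S}, η e =
      g (xiN ξ I₀ J₁ M N) M N := by
  classical
  set F : Finset BLEdge :=
    ((Finset.range (N+1)).image fun n => eSW (pt I₀ J₁ 0 n)) ∪
    ((Finset.range (M+1)).image fun m => eSE (pt I₀ J₁ m N)) with hF
  have hset : {e : BLEdge | sndPt e ∈ S ∧ fstPt e ∈ bdry S} = ↑F := by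
    ext e
    simp only [Set.mem_setOf_eq, hF, Finset.coe_union, Set.mem_union, Finset.coe_image,
      Set.mem_image, Finset.coe_range, Set.mem_Iio]
    constructor
    · rintro ⟨h1, h2⟩
      obtain ⟨m, n, hm, hn, hpe⟩ := (hmem _).1 h1
      have h2' : fstPt e ∉ S := h2.2
      obtain ⟨y', b⟩ := e
      cases b
      · right
        refine ⟨m, by omega, ?_⟩
        have hn' : n = N := by
          by_contra hne
          apply h2'
          refine (hmem _).2 ⟨m, n+1, hm, by omega, ?_⟩
          simp only [sndPt, fstPt, pt, Prod.ext_iff] at hpe ⊢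
          push_cast at hpe ⊢
          omega
        subst hn'
        simp only [sndPt, eSE, pt, Prod.ext_iff] at hpe ⊢
        push_cast at hpe ⊢
        simp only [and_true]
        omega
      · left
        refine ⟨n, by omega, ?_⟩
        have hm' : m = 0 := by
          by_contra hne
          apply h2'
          refine (hmem _).2 ⟨m-1, n, by omega, hn, ?_⟩
          simp only [sndPt, fstPt, pt, Prod.ext_iff] at hpe ⊢
          push_cast at hpe ⊢
          omega
        subst hm'
        simp only [sndPt, eSW, pt, Prod.ext_iff] at hpe ⊢
        push_cast at hpe ⊢
        simp only [and_true]
        omega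
    · rintro (⟨n, hn, rfl⟩ | ⟨m, hm, rfl⟩)
      · have hyS : pt I₀ J₁ 0 n ∈ S := (hmem _).2 ⟨0, n, by omega, by omega, rfl⟩
        refine ⟨by rw [sndPt_eSW]; exact hyS, ?_, not_mem_left S I₀ J₁ M N hmem n⟩
        right
        exact ⟨pt I₀ J₁ 0 n, hyS, by simp [fstPt, eSW], by simp [fstPt, eSW]⟩
      · have hyS : pt I₀ J₁ m N ∈ S := (hmem _).2 ⟨m, N, by omega, le_refl _, rfl⟩
        refine ⟨by rw [sndPt_eSE]; exact hyS, ?_, not_mem_bottom S I₀ J₁ M N hmem m⟩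
        right
        exact ⟨pt I₀ J₁ m N, hyS, by simp [fstPt, eSE], by simp [fstPt, eSE]⟩
  have hdisj : Disjoint ((Finset.range (N+1)).image fun n => eSW (pt I₀ J₁ 0 n))
      ((Finset.range (M+1)).image fun m => eSE (pt I₀ J₁ m N)) := by
    rw [Finset.disjoint_left]
    rintro e he1 he2
    simp only [Finset.mem_image, Finset.mem_range] at he1 he2
    obtain ⟨n', _, rfl⟩ := he1
    obtain ⟨m', _, hc⟩ := he2
    simp [eSE, eSW] at hc
  have hinj1 : ∀ a ∈ Finset.range (N+1), ∀ b ∈ Finset.range (N+1),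
      eSW (pt I₀ J₁ 0 a) = eSW (pt I₀ J₁ 0 b) → a = b := by
    intro a _ b _ hab
    simp only [eSW, pt, Prod.ext_iff] at hab
    omega
  have hinj2 : ∀ a ∈ Finset.range (M+1), ∀ b ∈ Finset.range (M+1),
      eSE (pt I₀ J₁ a N) = eSE (pt I₀ J₁ b N) → a = b := by
    intro a _ b _ hab
    simp only [eSE, pt, Prod.ext_iff] at hab
    omega
  rw [hset, finsum_mem_coe_finset, hF, Finset.sum_union hdisj,
    Finset.sum_image hinj1, Finset.sum_image hinj2]
  have hz : ∀ n ∈ Finset.range (N+1), η (eSW (pt I₀ J₁ 0 n)) = 0 := by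
    intro n hn
    simp only [Finset.mem_range] at hn
    apply hzb
    right
    refine ⟨?_, not_mem_left S I₀ J₁ M N hmem n, ?_⟩
    · rw [sndPt_eSW]; exact (hmem _).2 ⟨0, n, by omega, by omega, rfl⟩
    · rw [sndPt_eSW]; show (pt I₀ J₁ 0 n).1 - 1 < (pt I₀ J₁ 0 n).1; omega
  rw [Finset.sum_eq_zero hz, zero_add]
  have hval : ∀ m ∈ Finset.range (M+1), η (eSE (pt I₀ J₁ m N)) =
      g (xiN ξ I₀ J₁ M N) m N - (if m = 0 then 0 else g (xiN ξ I₀ J₁ M N) (m-1) N) := by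
    intro m hm
    simp only [Finset.mem_range] at hm
    exact (flow_formula S ξ η I₀ J₁ M N hmem hzb hrec hξ0 (m+N) m N (le_refl _)
      (by omega) (le_refl _)).2
  rw [Finset.sum_congr rfl hval, telescope]

/-- one step of an LPP path -/
def adj (z w : BLPt) : Prop :=
  w.1 = z.1 + 1 ∧ (w.2 = z.2 + 1 ∨ w.2 = z.2 - 1)

lemma g_ge_xi (ξn : ℕ → ℕ → ℝ) (hξ0 : ∀ m n, 0 ≤ ξn m n) (m n : ℕ) :
    ξn m n ≤ g ξn m n := by
  rw [g_eq ξn hξ0 m n]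
  have h1 : (0:ℝ) ≤ if m = 0 then 0 else g ξn (m-1) n := by
    split
    · exact le_refl 0
    · exact g_nonneg ξn hξ0 _ _
  have := le_max_left (if m = 0 then (0:ℝ) else g ξn (m-1) n)
    (if n = 0 then (0:ℝ) else g ξn m (n-1))
  linarith

/-- upper bound: any partial LPP path ending at `pt m n` has weight at most `g m n` -/
lemma sum_le (hmem : ∀ y, y ∈ S ↔ ∃ m n : ℕ, m ≤ M ∧ n ≤ N ∧ y = pt I₀ J₁ m n)
    (hξ0 : ∀ m n, 0 ≤ xiN ξ I₀ J₁ M N m n)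
    (hcompat : ∀ m n : ℕ, m ≤ M → n ≤ N → ξ (pt I₀ J₁ m n) = xiN ξ I₀ J₁ M N m n) :
    ∀ (l : List BLPt), l ≠ [] → (∀ y ∈ l, y ∈ S) → List.Chain' adj l →
      ∀ m n : ℕ, m ≤ M → n ≤ N → l.getLast? = some (pt I₀ J₁ m n) →
      (l.map ξ).sum ≤ g (xiN ξ I₀ J₁ M N) m n := by
  set GX := xiN ξ I₀ J₁ M N with hGX
  intro l
  induction l using List.reverseRecOn with
  | nil => intro h; exact absurd rfl h
  | append_singleton l w ihl =>
    intro _ hmemS hchain m n hm hn hlast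
    rw [List.getLast?_concat] at hlast
    have hw : w = pt I₀ J₁ m n := by injection hlast
    subst hw
    rcases eq_or_ne l [] with rfl | hlne
    · simp only [List.nil_append, List.map_cons, List.map_nil, List.sum_cons, List.sum_nil,
        add_zero]
      rw [hcompat m n hm hn]
      exact g_ge_xi GX hξ0 m n
    · -- l is nonempty, ends at some z ∈ S adjacent to pt m n
      obtain ⟨z, hz⟩ : ∃ z, l.getLast? = some z := by
        cases h : l.getLast? with
        | none => exact absurd (List.getLast?_isSome.2 hlne) (by simp [h])
        | some z => exact ⟨z, rfl⟩
      have hzS : z ∈ S := hmemS z (by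
        apply List.mem_append_left
        exact List.mem_of_mem_getLast? (by rw [hz]; rfl))
      obtain ⟨m', n', hm', hn', hze⟩ := (hmem _).1 hzS
      rw [List.Chain', List.isChain_append] at hchain
      have hadj : adj z (pt I₀ J₁ m n) := hchain.2.2 z (by rw [hz]; rfl) _ rfl
      rw [hze] at hadj
      have hsum : (l.map ξ).sum ≤ g GX m' n' :=
        ihl hlne (fun y hy => hmemS y (List.mem_append_left _ hy)) hchain.1 m' n' hm' hn' (hze ▸ hz)
      have hgrec := g_eq GX hξ0 m n
      have hcoord : ((m' : ℤ) = (m:ℤ) - 1 ∧ (n' : ℤ) = n) ∨ ((m' : ℤ) = m ∧ (n' : ℤ) = (n:ℤ) - 1) := by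
        obtain ⟨h1, h2⟩ := hadj
        simp only [pt] at h1 h2
        omega
      have hkey : g GX m' n' ≤ max (if m = 0 then 0 else g GX (m-1) n)
          (if n = 0 then 0 else g GX m (n-1)) := by
        rcases hcoord with ⟨h1, h2⟩ | ⟨h1, h2⟩
        · have hm0 : m ≠ 0 := by omega
          have : m' = m - 1 ∧ n' = n := by omega
          rw [this.1, this.2]
          rw [if_neg hm0]
          exact le_max_left _ _
        · have hn0 : n ≠ 0 := by omega
          have : m' = m ∧ n' = n - 1 := by omega
          rw [this.1, this.2]
          rw [if_neg hn0]
          exact le_max_right _ _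
      have hxw : ξ (pt I₀ J₁ m n) = GX m n := hcompat m n hm hn
      rw [List.map_append, List.sum_append]
      simp only [List.map_cons, List.map_nil, List.sum_cons, List.sum_nil, add_zero]
      rw [hxw, hgrec]
      linarith

open Classical in
/-- an optimal LPP path -/
noncomputable def P (ξn : ℕ → ℕ → ℝ) (I₀ J₁ : ℤ) : ℕ → ℕ → List BLPt
  | 0, 0 => [pt I₀ J₁ 0 0]
  | m+1, 0 => P ξn I₀ J₁ m 0 ++ [pt I₀ J₁ (m+1) 0]
  | 0, n+1 => P ξn I₀ J₁ 0 n ++ [pt I₀ J₁ 0 (n+1)]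
  | m+1, n+1 =>
      (if g ξn (m+1) n ≤ g ξn m (n+1) then P ξn I₀ J₁ m (n+1) else P ξn I₀ J₁ (m+1) n)
        ++ [pt I₀ J₁ (m+1) (n+1)]
termination_by m n => (m, n)

lemma P_ne_nil (ξn : ℕ → ℕ → ℝ) (m n : ℕ) : P ξn I₀ J₁ m n ≠ [] := by
  match m, n with
  | 0, 0 => simp [P]
  | m+1, 0 => simp [P]
  | 0, n+1 => simp [P]
  | m+1, n+1 => simp [P]

lemma P_getLast (ξn : ℕ → ℕ → ℝ) (m n : ℕ) :
    (P ξn I₀ J₁ m n).getLast? = some (pt I₀ J₁ m n) := by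
  match m, n with
  | 0, 0 => simp [P]
  | m+1, 0 => simp [P]
  | 0, n+1 => simp [P]
  | m+1, n+1 => simp [P, List.getLast?_concat]

lemma P_head (ξn : ℕ → ℕ → ℝ) (m n : ℕ) :
    (P ξn I₀ J₁ m n).head? = some (pt I₀ J₁ 0 0) := by
  induction m, n using P.induct with
  | case1 => simp [P]
  | case2 m ih => rw [P, List.head?_append_of_ne_nil _ (P_ne_nil I₀ J₁ ξn m 0)]; exact ih
  | case3 n ih => rw [P, List.head?_append_of_ne_nil _ (P_ne_nil I₀ J₁ ξn 0 n)]; exact ih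
  | case4 m n ih1 ih2 =>
      by_cases h : g ξn (m+1) n ≤ g ξn m (n+1)
      · rw [P, if_pos h, List.head?_append_of_ne_nil _ (P_ne_nil I₀ J₁ ξn m (n+1))]; exact ih1
      · rw [P, if_neg h, List.head?_append_of_ne_nil _ (P_ne_nil I₀ J₁ ξn (m+1) n)]; exact ih2

lemma P_mem (ξn : ℕ → ℕ → ℝ) (m n : ℕ) :
    ∀ y ∈ P ξn I₀ J₁ m n, ∃ m' n', m' ≤ m ∧ n' ≤ n ∧ y = pt I₀ J₁ m' n' := by
  induction m, n using P.induct with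
  | case1 =>
    intro y hy
    simp only [P, List.mem_singleton] at hy
    exact ⟨0, 0, le_refl _, le_refl _, hy⟩
  | case2 m ih =>
    intro y hy
    rw [P, List.mem_append, List.mem_singleton] at hy
    rcases hy with hy | rfl
    · obtain ⟨m', n', h1, h2, h3⟩ := ih y hy
      exact ⟨m', n', by omega, h2, h3⟩
    · exact ⟨m+1, 0, le_refl _, le_refl _, rfl⟩
  | case3 n ih =>
    intro y hy
    rw [P, List.mem_append, List.mem_singleton] at hy
    rcases hy with hy | rfl
    · obtain ⟨m', n', h1, h2, h3⟩ := ih y hy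
      exact ⟨m', n', h1, by omega, h3⟩
    · exact ⟨0, n+1, le_refl _, le_refl _, rfl⟩
  | case4 m n ih1 ih2 =>
    intro y hy
    by_cases h : g ξn (m+1) n ≤ g ξn m (n+1)
    · rw [P, if_pos h, List.mem_append, List.mem_singleton] at hy
      rcases hy with hy | rfl
      · obtain ⟨m', n', h1, h2, h3⟩ := ih1 y hy
        exact ⟨m', n', by omega, h2, h3⟩
      · exact ⟨m+1, n+1, le_refl _, le_refl _, rfl⟩
    · rw [P, if_neg h, List.mem_append, List.mem_singleton] at hy
      rcases hy with hy | rfl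
      · obtain ⟨m', n', h1, h2, h3⟩ := ih2 y hy
        exact ⟨m', n', h1, by omega, h3⟩
      · exact ⟨m+1, n+1, le_refl _, le_refl _, rfl⟩

lemma adj_pt_right (m n : ℕ) : adj (pt I₀ J₁ m n) (pt I₀ J₁ (m+1) n) := by
  constructor
  · simp only [pt]; push_cast; ring
  · left; simp only [pt]; push_cast; ring

lemma adj_pt_down (m n : ℕ) : adj (pt I₀ J₁ m n) (pt I₀ J₁ m (n+1)) := by
  constructor
  · simp only [pt]; push_cast; ring
  · right; simp only [pt]; push_cast; ring

lemma chain'_concat_of (l : List BLPt) (w z : BLPt) (hl : List.Chain' adj l)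
    (hz : l.getLast? = some z) (hadj : adj z w) : List.Chain' adj (l ++ [w]) := by
  rw [List.Chain', List.isChain_append]
  refine ⟨hl, List.isChain_singleton _, ?_⟩
  intro x hx y hy
  rw [hz, Option.mem_some_iff] at hx
  simp only [List.head?_cons, Option.mem_some_iff] at hy
  subst hx
  subst hy
  exact hadj

lemma P_chain (ξn : ℕ → ℕ → ℝ) (m n : ℕ) : List.Chain' adj (P ξn I₀ J₁ m n) := by
  induction m, n using P.induct with
  | case1 => simp [P, List.Chain']
  | case2 m ih =>
    rw [P]
    exact chain'_concat_of _ _ _ ih (P_getLast I₀ J₁ ξn m 0) (adj_pt_right I₀ J₁ m 0)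
  | case3 n ih =>
    rw [P]
    exact chain'_concat_of _ _ _ ih (P_getLast I₀ J₁ ξn 0 n) (adj_pt_down I₀ J₁ 0 n)
  | case4 m n ih1 ih2 =>
    by_cases h : g ξn (m+1) n ≤ g ξn m (n+1)
    · rw [P, if_pos h]
      exact chain'_concat_of _ _ _ ih1 (P_getLast I₀ J₁ ξn m (n+1))
        (adj_pt_right I₀ J₁ m (n+1))
    · rw [P, if_neg h]
      exact chain'_concat_of _ _ _ ih2 (P_getLast I₀ J₁ ξn (m+1) n)
        (adj_pt_down I₀ J₁ (m+1) n)

lemma P_sum (ξn : ℕ → ℕ → ℝ)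
    (hcompat : ∀ m n : ℕ, m ≤ M → n ≤ N → ξ (pt I₀ J₁ m n) = ξn m n) :
    ∀ m n : ℕ, m ≤ M → n ≤ N → ((P ξn I₀ J₁ m n).map ξ).sum = g ξn m n := by
  intro m n
  induction m, n using P.induct with
  | case1 =>
    intro hm hn
    simp only [P, List.map_cons, List.map_nil, List.sum_cons, List.sum_nil, add_zero]
    rw [hcompat 0 0 hm hn]
    simp [g]
  | case2 m ih =>
    intro hm hn
    rw [P, List.map_append, List.sum_append, ih (by omega) hn]
    simp only [List.map_cons, List.map_nil, List.sum_cons, List.sum_nil, add_zero]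
    rw [hcompat (m+1) 0 hm hn]
    simp only [g]
    ring
  | case3 n ih =>
    intro hm hn
    rw [P, List.map_append, List.sum_append, ih hm (by omega)]
    simp only [List.map_cons, List.map_nil, List.sum_cons, List.sum_nil, add_zero]
    rw [hcompat 0 (n+1) hm hn]
    simp only [g]
    ring
  | case4 m n ih1 ih2 =>
    intro hm hn
    by_cases h : g ξn (m+1) n ≤ g ξn m (n+1)
    · rw [P, if_pos h, List.map_append, List.sum_append, ih1 (by omega) hn]
      simp only [List.map_cons, List.map_nil, List.sum_cons, List.sum_nil, add_zero]
      rw [hcompat (m+1) (n+1) hm hn]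
      simp only [g]
      rw [max_eq_left h]
      ring
    · rw [P, if_neg h, List.map_append, List.sum_append, ih2 hm (by omega)]
      simp only [List.map_cons, List.map_nil, List.sum_cons, List.sum_nil, add_zero]
      rw [hcompat (m+1) (n+1) hm hn]
      simp only [g]
      rw [max_eq_right (le_of_not_ge h)]
      ring


lemma chain'_to_steps (l : List BLPt) (h : List.Chain' adj l) :
    ∀ i : ℕ, ∀ hi : i + 1 < l.length,
      (l[i+1]'hi).1 = (l[i]'(Nat.lt_of_succ_lt hi)).1 + 1 ∧
      ((l[i+1]'hi).2 = (l[i]'(Nat.lt_of_succ_lt hi)).2 + 1 ∨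
        (l[i+1]'hi).2 = (l[i]'(Nat.lt_of_succ_lt hi)).2 - 1) := by
  intro i hi
  rw [List.Chain', List.isChain_iff_getElem] at h
  have := h i (by omega)
  simpa [List.get_eq_getElem, adj] using this

lemma steps_to_chain' (l : List BLPt)
    (h : ∀ i : ℕ, ∀ hi : i + 1 < l.length,
      (l[i+1]'hi).1 = (l[i]'(Nat.lt_of_succ_lt hi)).1 + 1 ∧
      ((l[i+1]'hi).2 = (l[i]'(Nat.lt_of_succ_lt hi)).2 + 1 ∨
        (l[i+1]'hi).2 = (l[i]'(Nat.lt_of_succ_lt hi)).2 - 1)) :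
    List.Chain' adj l := by
  rw [List.Chain', List.isChain_iff_getElem]
  intro i hi
  have := h i (by omega)
  simpa [List.get_eq_getElem, adj] using this

end Flow
end BLAux

open BL in
/-- **Broken lines compute last passage percolation:** for a rectangular domain `S` and
a birth field `ξ ≥ 0` on `S`, if `η` is the flow field with zero boundary conditions
and births `ξ`, then `G_S(ξ) = H_S(ξ)`, the total flow out through the left-pointing
boundary edges (equivalently, the total weight of the broken lines crossing `S`). -/
theorem lpp_eq_broken_line_weight (S : Set BLPt) (hS : IsRectDomain S)
    (ξ : BLPt → ℝ) (hξ : ∀ y ∈ S, 0 ≤ ξ y)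
    (η : BLEdge → ℝ) (hη : IsFlowField S η)
    (hzb : ZeroLeftBoundary S η) (hrec : BirthRecursion S η ξ) :
    lppValue S ξ = ∑ᶠ e ∈ {e : BLEdge | sndPt e ∈ S ∧ fstPt e ∈ bdry S}, η e := by
  classical
  obtain ⟨I₀, J₁, M, N, hmem⟩ := BLAux.exists_coords S hS
  have hξ0 : ∀ m n, 0 ≤ BLAux.xiN ξ I₀ J₁ M N m n := BLAux.xiN_nonneg S ξ I₀ J₁ M N hξ hmem
  have hcompat : ∀ m n : ℕ, m ≤ M → n ≤ N → ξ (BLAux.pt I₀ J₁ m n) = BLAux.xiN ξ I₀ J₁ M N m n := by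
    intro m n hm hn
    simp [BLAux.xiN, hm, hn]
  rw [BLAux.H_eq S ξ η I₀ J₁ M N hmem hzb hrec hξ0]
  set GX := BLAux.xiN ξ I₀ J₁ M N with hGX
  -- the optimal path
  have hpath : IsLppPath S (BLAux.P GX I₀ J₁ M N) := by
    refine ⟨BLAux.P_ne_nil I₀ J₁ GX M N, ?_, ?_, ?_, ?_⟩
    · intro y hy
      obtain ⟨m', n', h1, h2, rfl⟩ := BLAux.P_mem I₀ J₁ GX M N y hy
      exact (hmem _).2 ⟨m', n', h1, h2, rfl⟩
    · intro y hy y' hy'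
      rw [BLAux.P_head I₀ J₁ GX M N] at hy
      obtain rfl : BLAux.pt I₀ J₁ 0 0 = y := by injection hy
      obtain ⟨m', n', _, _, rfl⟩ := (hmem _).1 hy'
      simp only [BLAux.pt]
      omega
    · intro y hy y' hy'
      rw [BLAux.P_getLast I₀ J₁ GX M N] at hy
      obtain rfl : BLAux.pt I₀ J₁ M N = y := by injection hy
      obtain ⟨m', n', hm', hn', rfl⟩ := (hmem _).1 hy'
      simp only [BLAux.pt]
      omega
    · exact BLAux.chain'_to_steps _ (BLAux.P_chain I₀ J₁ GX M N)
  have hsum : ((BLAux.P GX I₀ J₁ M N).map ξ).sum = BLAux.g GX M N :=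
    BLAux.P_sum ξ I₀ J₁ M N GX hcompat M N (le_refl _) (le_refl _)
  have hmemV : BLAux.g GX M N ∈ {v : ℝ | ∃ p : List BLPt, IsLppPath S p ∧ (p.map ξ).sum = v} :=
    ⟨BLAux.P GX I₀ J₁ M N, hpath, hsum⟩
  have hub : ∀ v ∈ {v : ℝ | ∃ p : List BLPt, IsLppPath S p ∧ (p.map ξ).sum = v},
      v ≤ BLAux.g GX M N := by
    rintro v ⟨p, ⟨hne, hmemS, hhead, hlast, hstep⟩, rfl⟩
    obtain ⟨z, hz⟩ : ∃ z, p.getLast? = some z := by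
      cases h : p.getLast? with
      | none => exact absurd (List.getLast?_isSome.2 hne) (by simp [h])
      | some z => exact ⟨z, rfl⟩
    have hzS : z ∈ S := hmemS z (List.mem_of_mem_getLast? (by rw [hz]; rfl))
    obtain ⟨m, n, hm, hn, rfl⟩ := (hmem _).1 hzS
    have h1 := hlast _ hz (BLAux.pt I₀ J₁ M N) ((hmem _).2 ⟨M, N, le_refl _, le_refl _, rfl⟩)
    have hMN : m = M ∧ n = N := by
      simp only [BLAux.pt] at h1
      omega
    have hle := BLAux.sum_le S ξ I₀ J₁ M N hmem hξ0 hcompat p hne hmemS (BLAux.steps_to_chain' p hstep)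
      m n hm hn hz
    rw [hMN.1, hMN.2] at hle
    exact hle
  rw [lppValue]
  exact le_antisymm (csSup_le ⟨_, hmemV⟩ hub) (le_csSup ⟨_, hub⟩ hmemV)
end

section
/- Time-reflection symmetry of the total broken-line weight: let S be a rectangular domain and ξ : S → [0,∞) a birth field. Let M : (t,x) ↦ (−t,x), S' = M(S), and ξ'(t,x) = ξ(−t,x). Then H_S(ξ) = H_{S'}(ξ'). -/
namespace BLAux

/-- Corner-to-boundary last passage value on the rectangle `[A,B] × [C,D]`. -/
noncomputable def phi (w : ℤ → ℤ → ℝ) (A B C D : ℤ) : ℝ :=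
  if _ : A ≤ B ∧ C ≤ D then
    w B C + max (phi w A (B - 1) C D) (phi w A B (C + 1) D)
  else 0
termination_by ((B - A) + (D - C) + 2).toNat
decreasing_by
  · omega
  · omega

lemma phi_pos {A B C D : ℤ} (w : ℤ → ℤ → ℝ) (h1 : A ≤ B) (h2 : C ≤ D) :
    phi w A B C D = w B C + max (phi w A (B - 1) C D) (phi w A B (C + 1) D) := by
  rw [phi]; exact dif_pos ⟨h1, h2⟩

lemma phi_neg {A B C D : ℤ} (w : ℤ → ℤ → ℝ) (h : ¬(A ≤ B ∧ C ≤ D)) :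
    phi w A B C D = 0 := by
  rw [phi]; exact dif_neg h

lemma phi_nonneg (w : ℤ → ℤ → ℝ) (hw : ∀ p q, 0 ≤ w p q) (A B C D : ℤ) :
    0 ≤ phi w A B C D := by
  by_cases h : A ≤ B ∧ C ≤ D
  · rw [phi_pos w h.1 h.2]
    have h1 := phi_nonneg w hw A (B - 1) C D
    have := hw B C
    have := le_max_left (phi w A (B - 1) C D) (phi w A B (C + 1) D)
    linarith
  · rw [phi_neg w h]
termination_by ((B - A) + (D - C) + 2).toNat
decreasing_by omega

lemma phi_peel (w : ℤ → ℤ → ℝ) (hw : ∀ p q, 0 ≤ w p q) (A B C D : ℤ) :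
    phi w A B C D = if A ≤ B ∧ C ≤ D then
      w A D + max (phi w (A + 1) B C D) (phi w A B C (D - 1)) else 0 := by
  by_cases h : A ≤ B ∧ C ≤ D
  · obtain ⟨h1, h2⟩ := h
    rw [if_pos ⟨h1, h2⟩]
    rcases eq_or_lt_of_le h1 with hAB | hAB <;> rcases eq_or_lt_of_le h2 with hCD | hCD
    · -- 1×1
      subst hAB; subst hCD
      rw [phi_pos w le_rfl le_rfl, phi_neg w (by omega), phi_neg w (by omega),
        phi_neg w (by omega), phi_neg w (by omega)]
    · -- single column A = B, C < D
      subst hAB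
      set X' := phi w A A (C + 1) (D - 1) with hX'
      have hX'0 : 0 ≤ X' := phi_nonneg w hw A A (C + 1) (D - 1)
      have l1 : phi w A A C D = w A C + max 0 (phi w A A (C + 1) D) := by
        rw [phi_pos w le_rfl h2, phi_neg w (by omega)]
      have l2 : phi w A A (C + 1) D
          = w A D + max 0 X' := by
        rw [phi_peel w hw A A (C + 1) D, if_pos ⟨le_rfl, by omega⟩, phi_neg w (by omega)]
      have r1 : phi w (A + 1) A C D = 0 := phi_neg w (by omega)
      have r2 : phi w A A C (D - 1) = w A C + max 0 X' := by
        rw [phi_pos w le_rfl (by omega : C ≤ D - 1), phi_neg w (by omega)]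
      rw [l1, l2, r1, r2, max_eq_right hX'0,
        max_eq_right (by have := hw A D; linarith : (0:ℝ) ≤ w A D + X'),
        max_eq_right (by have := hw A C; linarith : (0:ℝ) ≤ w A C + X')]
      ring
    · -- single row C = D, A < B
      subst hCD
      set X' := phi w (A + 1) (B - 1) C C with hX'
      have hX'0 : 0 ≤ X' := phi_nonneg w hw (A + 1) (B - 1) C C
      have l1 : phi w A B C C = w B C + max (phi w A (B - 1) C C) 0 := by
        rw [phi_pos w h1 le_rfl, phi_neg (A := A) (B := B) (C := C + 1) (D := C) w (by omega)]
      have l2 : phi w A (B - 1) C C = w A C + max X' 0 := by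
        rw [phi_peel w hw A (B - 1) C C, if_pos ⟨by omega, le_rfl⟩,
          phi_neg (A := A) (B := B - 1) (C := C) (D := C - 1) w (by omega)]
      have r1 : phi w (A + 1) B C C = w B C + max X' 0 := by
        rw [phi_pos w (by omega : A + 1 ≤ B) le_rfl,
          phi_neg (A := A + 1) (B := B) (C := C + 1) (D := C) w (by omega)]
      have r2 : phi w A B C (C - 1) = 0 := phi_neg w (by omega)
      rw [l1, l2, r1, r2, max_eq_left hX'0,
        max_eq_left (by have := hw A C; linarith : (0:ℝ) ≤ w A C + X'),
        max_eq_left (by have := hw B C; linarith : (0:ℝ) ≤ w B C + X')]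
      ring
    · -- interior
      have l2 : phi w A (B - 1) C D
          = w A D + max (phi w (A + 1) (B - 1) C D) (phi w A (B - 1) C (D - 1)) := by
        rw [phi_peel w hw A (B - 1) C D, if_pos ⟨by omega, h2⟩]
      have l3 : phi w A B (C + 1) D
          = w A D + max (phi w (A + 1) B (C + 1) D) (phi w A B (C + 1) (D - 1)) := by
        rw [phi_peel w hw A B (C + 1) D, if_pos ⟨h1, by omega⟩]
      have r1 : phi w (A + 1) B C D
          = w B C + max (phi w (A + 1) (B - 1) C D) (phi w (A + 1) B (C + 1) D) :=
        phi_pos w (by omega) h2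
      have r2 : phi w A B C (D - 1)
          = w B C + max (phi w A (B - 1) C (D - 1)) (phi w A B (C + 1) (D - 1)) :=
        phi_pos w h1 (by omega)
      rw [phi_pos w h1 h2, l2, l3, r1, r2, max_add_add_left, max_add_add_left,
        max_max_max_comm]
      ring
  · rw [phi_neg w h, if_neg h]
termination_by ((B - A) + (D - C) + 2).toNat
decreasing_by all_goals omega

lemma phi_swap (w : ℤ → ℤ → ℝ) (hw : ∀ p q, 0 ≤ w p q) (A B C D : ℤ) :
    phi w A B C D = phi (fun p q => w q p) C D A B := by
  by_cases h : A ≤ B ∧ C ≤ D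
  · rw [phi_pos (fun p q => w q p) h.2 h.1,
      ← phi_swap w hw A B C (D - 1), ← phi_swap w hw (A + 1) B C D,
      phi_peel w hw A B C D, if_pos h]
    rw [max_comm]
  · rw [phi_neg w h, phi_neg (fun p q => w q p) (by omega)]
termination_by ((B - A) + (D - C) + 2).toNat
decreasing_by all_goals omega

end BLAux

namespace BLAux2
open BLAux

lemma eta_eq (S : Set BLPt) (A B C D : ℤ)
    (hmem : ∀ t x : ℤ, ((t, x) : BLPt) ∈ S ↔
      ((x + t) % 2 = 0 ∧ 2*A ≤ x + t ∧ x + t ≤ 2*B ∧ 2*C ≤ x - t ∧ x - t ≤ 2*D))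
    (ξ : BLPt → ℝ) (η : BLEdge → ℝ)
    (hzb : BL.ZeroLeftBoundary S η) (hrec : BL.BirthRecursion S η ξ)
    (w : ℤ → ℤ → ℝ) (hw : ∀ p q, A ≤ p → p ≤ B → C ≤ q → q ≤ D → w p q = ξ (p - q, p + q))
    (p q : ℤ) (hp1 : A ≤ p) (hp2 : p ≤ B) (hq1 : C ≤ q) (hq2 : q ≤ D) :
    η (BL.eNE (p - q, p + q)) = phi w A p q D - phi w A p (q + 1) D ∧
    η (BL.eSE (p - q, p + q)) = phi w A p q D - phi w A (p - 1) q D := by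
  have hyS : ((p - q, p + q) : BLPt) ∈ S := (hmem _ _).2 (by omega)
  have hSW : η (BL.eSW (p - q, p + q)) = phi w A (p - 1) q D - phi w A (p - 1) (q + 1) D := by
    rcases lt_or_eq_of_le hp1 with h | h
    · have heq := (eta_eq S A B C D hmem ξ η hzb hrec w hw (p - 1) q
        (by omega) (by omega) hq1 hq2).1
      have he : BL.eNE ((p - 1 : ℤ) - q, (p - 1 : ℤ) + q) = BL.eSW (p - q, p + q) := by
        simp only [BL.eNE, BL.eSW, Prod.mk.injEq]
        exact ⟨⟨by ring, by ring⟩, trivial⟩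
      rw [← he, heq]
    · have h0 : η (BL.eSW (p - q, p + q)) = 0 := by
        apply hzb
        right
        refine ⟨?_, ?_, ?_⟩
        · show BL.sndPt _ ∈ S
          simp only [BL.sndPt, BL.eSW, if_true]
          have he : ((p - q - 1 + 1 : ℤ), (p + q - 1 + 1 : ℤ)) = ((p - q, p + q) : BLPt) := by
            simp only [Prod.mk.injEq]; omega
          rw [he]; exact hyS
        · show BL.fstPt _ ∉ S
          simp only [BL.fstPt, BL.eSW]
          intro hc
          have := (hmem _ _).1 hc
          omega
        · simp only [BL.fstPt, BL.sndPt, BL.eSW, if_true]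
          omega
      rw [h0, phi_neg (A := A) (B := p - 1) (C := q) (D := D) w (by omega),
        phi_neg (A := A) (B := p - 1) (C := q + 1) (D := D) w (by omega)]
      norm_num
  have hNW : η (BL.eNW (p - q, p + q)) = phi w A p (q + 1) D - phi w A (p - 1) (q + 1) D := by
    rcases lt_or_eq_of_le hq2 with h | h
    · have heq := (eta_eq S A B C D hmem ξ η hzb hrec w hw p (q + 1)
        hp1 hp2 (by omega) (by omega)).2
      have he : BL.eSE ((p : ℤ) - (q + 1), (p : ℤ) + (q + 1)) = BL.eNW (p - q, p + q) := by
        simp only [BL.eSE, BL.eNW, Prod.mk.injEq]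
        exact ⟨⟨by ring, by ring⟩, trivial⟩
      rw [← he, heq]
    · have h0 : η (BL.eNW (p - q, p + q)) = 0 := by
        apply hzb
        left
        refine ⟨hyS, ?_, ?_⟩
        · show BL.sndPt _ ∉ S
          simp only [BL.sndPt, BL.eNW, Bool.false_eq_true, if_false]
          intro hc
          have := (hmem _ _).1 hc
          omega
        · simp only [BL.fstPt, BL.sndPt, BL.eNW, Bool.false_eq_true, if_false]
          omega
      rw [h0, phi_neg (A := A) (B := p) (C := q + 1) (D := D) w (by omega),
        phi_neg (A := A) (B := p - 1) (C := q + 1) (D := D) w (by omega)]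
      norm_num
  obtain ⟨h1, h2⟩ := hrec _ hyS
  have hphi : phi w A p q D = w p q + max (phi w A (p - 1) q D) (phi w A p (q + 1) D) :=
    phi_pos w hp1 hq2
  constructor
  · rw [h1, hSW, hNW, hphi, ← hw p q hp1 hp2 hq1 hq2]
    set a := phi w A (p - 1) q D
    set b := phi w A p (q + 1) D
    set m := phi w A (p - 1) (q + 1) D
    rcases le_total a b with hab | hab
    · rw [max_eq_right (by linarith : a - m - (b - m) ≤ (0:ℝ)), max_eq_right hab]; ring
    · rw [max_eq_left (by linarith : (0:ℝ) ≤ a - m - (b - m)), max_eq_left hab]; ring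
  · rw [h2, hSW, hNW, hphi, ← hw p q hp1 hp2 hq1 hq2]
    set a := phi w A (p - 1) q D
    set b := phi w A p (q + 1) D
    set m := phi w A (p - 1) (q + 1) D
    rcases le_total a b with hab | hab
    · rw [max_eq_left (by linarith : (0:ℝ) ≤ b - m - (a - m)), max_eq_right hab]; ring
    · rw [max_eq_right (by linarith : b - m - (a - m) ≤ (0:ℝ)), max_eq_left hab]; ring
termination_by ((p - A) + (D - q)).toNat
decreasing_by all_goals omega

lemma tele (f : ℤ → ℝ) : ∀ (n : ℕ) (a : ℤ),
    ∑ p ∈ Finset.Icc a (a + (n : ℤ)), (f p - f (p - 1)) = f (a + (n : ℤ)) - f (a - 1) := by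
  intro n
  induction n with
  | zero => intro a; simp
  | succ n ih =>
    intro a
    have hins : Finset.Icc a (a + ((n : ℤ) + 1)) = insert (a + (n : ℤ) + 1) (Finset.Icc a (a + (n : ℤ))) := by
      ext x; simp only [Finset.mem_Icc, Finset.mem_insert]; omega
    push_cast
    rw [hins, Finset.sum_insert (by simp only [Finset.mem_Icc]; omega), ih a]
    have : a + (n : ℤ) + 1 - 1 = a + (n : ℤ) := by ring
    rw [this]; ring

lemma Hsum (S : Set BLPt) (A B C D : ℤ) (hAB : A ≤ B) (hCD : C ≤ D)
    (hmem : ∀ t x : ℤ, ((t, x) : BLPt) ∈ S ↔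
      ((x + t) % 2 = 0 ∧ 2*A ≤ x + t ∧ x + t ≤ 2*B ∧ 2*C ≤ x - t ∧ x - t ≤ 2*D))
    (ξ : BLPt → ℝ) (η : BLEdge → ℝ)
    (hzb : BL.ZeroLeftBoundary S η) (hrec : BL.BirthRecursion S η ξ)
    (w : ℤ → ℤ → ℝ) (hw : ∀ p q, A ≤ p → p ≤ B → C ≤ q → q ≤ D → w p q = ξ (p - q, p + q)) :
    (∑ᶠ e ∈ {e : BLEdge | BL.sndPt e ∈ S ∧ BL.fstPt e ∈ BL.bdry S}, η e) = phi w A B C D := by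
  classical
  set g : ℤ → BLEdge := fun p => ((p - C + 1, p + C - 1), false) with hg
  have key : {e : BLEdge | BL.sndPt e ∈ S ∧ BL.fstPt e ∈ BL.bdry S} ∩ Function.support η
      = ↑((Finset.Icc A B).image g) ∩ Function.support η := by
    ext e
    simp only [Set.mem_inter_iff, Set.mem_setOf_eq, Finset.coe_image, Set.mem_image,
      Finset.mem_coe, Finset.mem_Icc, Function.mem_support]
    constructor
    · rintro ⟨⟨hs, hb⟩, hne⟩
      refine ⟨?_, hne⟩
      obtain ⟨⟨t, x⟩, bo⟩ := e
      have hnfst : ((t, x) : BLPt) ∉ S := hb.2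
      cases bo
      case true =>
        exfalso; apply hne; apply hzb; right
        refine ⟨hs, hnfst, ?_⟩
        simp [BL.fstPt, BL.sndPt]
      case false =>
        simp only [BL.sndPt, Bool.false_eq_true, if_false] at hs
        have hm := (hmem _ _).1 hs
        have hnc : ¬((x + t) % 2 = 0 ∧ 2*A ≤ x + t ∧ x + t ≤ 2*B ∧ 2*C ≤ x - t ∧ x - t ≤ 2*D) :=
          fun hc => hnfst ((hmem t x).2 hc)
        refine ⟨(x + t) / 2, by omega, ?_⟩
        simp only [hg, Prod.mk.injEq]
        refine ⟨⟨by omega, by omega⟩, trivial⟩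
    · rintro ⟨⟨p, hp, rfl⟩, hne⟩
      have hsnd : BL.sndPt (g p) = ((p - C, p + C) : BLPt) := by
        simp only [hg, BL.sndPt, Bool.false_eq_true, if_false, Prod.mk.injEq]
        omega
      have hsS : BL.sndPt (g p) ∈ S := by rw [hsnd]; exact (hmem _ _).2 (by omega)
      have hfns : BL.fstPt (g p) ∉ S := by
        simp only [hg, BL.fstPt]
        intro hc
        have := (hmem _ _).1 hc
        omega
      refine ⟨⟨hsS, ?_, hfns⟩, hne⟩
      right
      refine ⟨(p - C, p + C), (hmem _ _).2 (by omega), ?_, ?_⟩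
      · show ((p - C + 1 : ℤ) - (p - C)) ^ 2 = 1
        have : (p - C + 1 : ℤ) - (p - C) = 1 := by ring
        rw [this]; norm_num
      · show ((p + C - 1 : ℤ) - (p + C)) ^ 2 = 1
        have : (p + C - 1 : ℤ) - (p + C) = -1 := by ring
        rw [this]; norm_num
  rw [finsum_mem_eq_sum_of_inter_support_eq η key,
    Finset.sum_image (by
      intro p hp p' hp' he
      simp only [hg, Prod.mk.injEq] at he
      omega)]
  have hval : ∀ p ∈ Finset.Icc A B, η (g p)
      = phi w A p C D - phi w A (p - 1) C D := by
    intro p hp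
    rw [Finset.mem_Icc] at hp
    exact (eta_eq S A B C D hmem ξ η hzb hrec w hw p C hp.1 hp.2 le_rfl hCD).2
  rw [Finset.sum_congr rfl hval]
  have hB : B = A + ((B - A).toNat : ℤ) := by omega
  rw [hB, tele (fun p => phi w A p C D) (B - A).toNat A]
  rw [phi_neg (A := A) (B := A - 1) (C := C) (D := D) w (by omega)]
  ring

end BLAux2


open BL in
/-- **Time-reflection symmetry of the total broken-line weight:** let `S` be a
rectangular domain, `ξ ≥ 0` a birth field on `S`, `S' = M(S)` with `M(t,x) = (−t,x)`
and `ξ'(t,x) = ξ(−t,x)`. If `η` (resp. `η'`) is the flow field on `ℰ(S̄)` (resp.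
`ℰ(S̄')`) with zero boundary conditions and births `ξ` (resp. `ξ'`), then
`H_S(ξ) = H_{S'}(ξ')`. -/
theorem total_weight_time_reflection (S : Set BLPt) (hS : IsRectDomain S)
    (ξ ξ' : BLPt → ℝ) (hξ0 : ∀ y ∈ S, 0 ≤ ξ y)
    (S' : Set BLPt) (hS' : S' = (fun y : BLPt => (-y.1, y.2)) '' S)
    (hξ' : ∀ y : BLPt, ξ' y = ξ (-y.1, y.2))
    (η η' : BLEdge → ℝ)
    (hη : IsFlowField S η) (hzb : ZeroLeftBoundary S η) (hrec : BirthRecursion S η ξ)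
    (hη' : IsFlowField S' η') (hzb' : ZeroLeftBoundary S' η')
    (hrec' : BirthRecursion S' η' ξ') :
    (∑ᶠ e ∈ {e : BLEdge | sndPt e ∈ S ∧ fstPt e ∈ bdry S}, η e) =
      (∑ᶠ e ∈ {e : BLEdge | sndPt e ∈ S' ∧ fstPt e ∈ bdry S'}, η' e) := by
  classical
  obtain ⟨hne, a, b, c, d, hSd⟩ := hS
  set A := (a + 1) / 2 with hA
  set B := b / 2 with hB
  set C := (c + 1) / 2 with hC
  set D := d / 2 with hD
  have hmemS : ∀ t x : ℤ, ((t, x) : BLPt) ∈ S ↔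
      ((x + t) % 2 = 0 ∧ 2*A ≤ x + t ∧ x + t ≤ 2*B ∧ 2*C ≤ x - t ∧ x - t ≤ 2*D) := by
    intro t x
    rw [hSd]
    simp only [Set.mem_setOf_eq]
    omega
  clear_value A B C D
  clear hA hB hC hD
  obtain ⟨y, hy⟩ := hne
  have hy' : ((y.1, y.2) : BLPt) ∈ S := by simpa using hy
  have hy2 := (hmemS y.1 y.2).1 hy'
  have hAB : A ≤ B := by omega
  have hCD : C ≤ D := by omega
  have hmemS' : ∀ t x : ℤ, ((t, x) : BLPt) ∈ S' ↔
      ((x + t) % 2 = 0 ∧ 2*C ≤ x + t ∧ x + t ≤ 2*D ∧ 2*A ≤ x - t ∧ x - t ≤ 2*B) := by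
    intro t x
    rw [hS']
    constructor
    · rintro ⟨⟨t', x'⟩, hmem, heq⟩
      have := (hmemS t' x').1 hmem
      simp only [Prod.mk.injEq] at heq
      omega
    · intro h
      exact ⟨(-t, x), (hmemS (-t) x).2 (by omega), by simp⟩
  set w : ℤ → ℤ → ℝ := fun p q =>
    if A ≤ p ∧ p ≤ B ∧ C ≤ q ∧ q ≤ D then ξ (p - q, p + q) else 0 with hwdef
  set w' : ℤ → ℤ → ℝ := fun p q =>
    if C ≤ p ∧ p ≤ D ∧ A ≤ q ∧ q ≤ B then ξ' (p - q, p + q) else 0 with hwdef'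
  have hw0 : ∀ p q, 0 ≤ w p q := by
    intro p q
    simp only [hwdef]
    split
    · next h => exact hξ0 _ ((hmemS _ _).2 (by omega))
    · exact le_rfl
  have hww' : w' = fun p q => w q p := by
    funext p q
    simp only [hwdef, hwdef']
    by_cases h : C ≤ p ∧ p ≤ D ∧ A ≤ q ∧ q ≤ B
    · rw [if_pos h, if_pos (by tauto), hξ']
      have : ((-(p - q) : ℤ), (p + q : ℤ)) = ((q - p : ℤ), (q + p : ℤ)) := by
        simp only [Prod.mk.injEq]; omega
      rw [this]
    · rw [if_neg h, if_neg (by tauto)]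
  rw [BLAux2.Hsum S A B C D hAB hCD hmemS ξ η hzb hrec w
      (fun p q h1 h2 h3 h4 => if_pos ⟨h1, h2, h3, h4⟩),
    BLAux2.Hsum S' C D A B hCD hAB hmemS' ξ' η' hzb' hrec' w'
      (fun p q h1 h2 h3 h4 => if_pos ⟨h1, h2, h3, h4⟩),
    hww']
  exact BLAux.phi_swap w hw0 A B C D
end
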